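/- Let G be a connected finite simple graph on n vertices with at least one edge. Then the rank over ℝ of the adjacency matrix of the line graph L(G) is at least n − 2. -/

import Mathlib

attribute [local instance] Classical.propDecidable

namespace LGR

/-- A real number expressible as odd/odd ratio of integers. -/
def OddRat (x : ℝ) : Prop := ∃ a b : ℤ, Odd a ∧ Odd b ∧ x = a / b

lemma OddRat.ne_zero {x : ℝ} (h : OddRat x) : x ≠ 0 := by
  obtain ⟨a, b, ha, hb, rfl⟩ := h
  have ha' : (a : ℝ) ≠ 0 := Int.cast_ne_zero.2 (by rintro rfl; simp [Int.odd_iff] at ha)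
  have hb' : (b : ℝ) ≠ 0 := Int.cast_ne_zero.2 (by rintro rfl; simp [Int.odd_iff] at hb)
  exact div_ne_zero ha' hb'

lemma OddRat.inv {x : ℝ} (h : OddRat x) : OddRat x⁻¹ := by
  obtain ⟨a, b, ha, hb, rfl⟩ := h
  exact ⟨b, a, hb, ha, by rw [inv_div]⟩

lemma oddrat_sum {α : Type*} (s : Finset α) (f : α → ℝ)
    (h : ∀ u ∈ s, OddRat (f u)) :
    ∃ a b : ℤ, Odd b ∧ Even (a + s.card) ∧ ∑ u ∈ s, f u = a / b := by
  classical
  induction s using Finset.induction with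
  | empty => exact ⟨0, 1, odd_one, by simp, by simp⟩
  | insert _ _ hnotmem =>
    rename_i u s ih
    obtain ⟨a, b, hb, hpar, hsum⟩ := ih (fun w hw => h w (Finset.mem_insert_of_mem hw))
    obtain ⟨a', b', ha', hb', hfu⟩ := h u (Finset.mem_insert_self u s)
    have hbne : (b : ℝ) ≠ 0 := Int.cast_ne_zero.2 (by rintro rfl; simp [Int.odd_iff] at hb)
    have hbne' : (b' : ℝ) ≠ 0 := Int.cast_ne_zero.2 (by rintro rfl; simp [Int.odd_iff] at hb')
    refine ⟨a' * b + a * b', b' * b, hb'.mul hb, ?_, ?_⟩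
    · rw [Finset.card_insert_of_notMem hnotmem]
      have h1 : ¬ Even a' := Int.not_even_iff_odd.2 ha'
      have h2 : ¬ Even b := Int.not_even_iff_odd.2 hb
      have h3 : ¬ Even b' := Int.not_even_iff_odd.2 hb'
      have h4 : (Even a ↔ Even ((s.card : ℤ))) := Int.even_add.mp hpar
      have h5 : ¬ Even (1 : ℤ) := by decide
      push_cast
      simp only [Int.even_add, Int.even_mul]
      tauto
    · rw [Finset.sum_insert hnotmem, hsum, hfu, div_add_div _ _ hbne' hbne]
      push_cast
      ring_nf

/-- Fuel-indexed elimination coefficients. -/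
noncomputable def Dfun {α : Type*} (c : α → Finset α) : ℕ → α → ℝ
  | 0, _ => 1
  | (k+1), v => 1 - (c v).card - ∑ u ∈ c v, (Dfun c k u)⁻¹


lemma rank_submatrix_le_general {l m n o : Type*} [Fintype l] [Fintype m] [Fintype n] [Fintype o]
    [DecidableEq m] [DecidableEq n]
    (A : Matrix m n ℝ) (f : l → m) (g : o → n) : (A.submatrix f g).rank ≤ A.rank := by
  have hEq : A.submatrix f g =
      ((1 : Matrix m m ℝ).submatrix f id * A) * (1 : Matrix n n ℝ).submatrix id g := by
    ext i j
    simp [Matrix.mul_apply, Matrix.one_apply, Finset.sum_ite_eq, Finset.sum_ite_eq']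
  rw [hEq]
  exact le_trans (Matrix.rank_mul_le_left _ _) (Matrix.rank_mul_le_right _ _)

theorem core {V : Type*} [Fintype V] (G : SimpleGraph V) (r : V) (par : V → V)
    (hadj : ∀ v, v ≠ r → G.Adj (par v) v)
    (hdep : ∀ v, v ≠ r → G.dist r (par v) + 1 = G.dist r v)
    (hbound : ∀ v, G.dist r v < Fintype.card V) :
    Fintype.card V - 2 ≤ ((G.lineGraph).adjMatrix ℝ).rank := by
  classical
  set n := Fintype.card V with hn
  have hpv : ∀ v : {x : V // x ≠ r}, G.Adj (par v.1) v.1 := fun v => hadj v.1 v.2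
  set e : {x : V // x ≠ r} → G.edgeSet :=
    fun v => ⟨s(par v.1, v.1), G.mem_edgeSet.2 (hpv v)⟩ with he
  have hmem : ∀ (a : V) (w : {x : V // x ≠ r}),
      a ∈ (e w : Sym2 V) ↔ a = par w.1 ∨ a = w.1 := by
    intro a w; simp [he, Sym2.mem_iff]
  have hpne : ∀ v : {x : V // x ≠ r}, par v.1 ≠ v.1 := fun v => (hpv v).ne
  have he_inj : Function.Injective e := by
    intro v w hvw
    have h2 : s(par v.1, v.1) = s(par w.1, w.1) := congrArg Subtype.val hvw
    rw [Sym2.eq_iff] at h2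
    rcases h2 with ⟨_, h⟩ | ⟨h1, h2⟩
    · exact Subtype.ext h
    · exfalso
      have d1 := hdep v.1 v.2
      have d2 := hdep w.1 w.2
      rw [h1] at d1; rw [← h2] at d2
      omega
  set M := ((G.lineGraph).adjMatrix ℝ).submatrix e e with hM
  set children : {x : V // x ≠ r} → Finset {x : V // x ≠ r} :=
    fun v => Finset.univ.filter (fun u => par u.1 = v.1) with hch
  have hchild_dep : ∀ v u : {x : V // x ≠ r}, u ∈ children v →
      G.dist r u.1 = G.dist r v.1 + 1 := by
    intro v u hu
    have hp : par u.1 = v.1 := by simpa [hch] using hu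
    have := hdep u.1 u.2
    rw [hp] at this; omega
  -- odd rationality of coefficients
  have OR : ∀ (k : ℕ) (v : {x : V // x ≠ r}), n - G.dist r v.1 = k →
      OddRat (Dfun children k v) := by
    intro k
    induction k with
    | zero => intro v hv; exact absurd hv (by have := hbound v.1; omega)
    | succ k ih =>
      intro v hv
      have hdeps : ∀ u ∈ children v, n - G.dist r u.1 = k := by
        intro u hu
        have h1 := hchild_dep v u hu
        have h2 := hbound u.1
        omega
      obtain ⟨a, b, hb, hpar, hsum⟩ := oddrat_sum (children v)
        (fun u => (Dfun children k u)⁻¹)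
        (fun u hu => (ih u (hdeps u hu)).inv)
      have hbne : (b : ℝ) ≠ 0 := Int.cast_ne_zero.2 (by rintro rfl; simp [Int.odd_iff] at hb)
      refine ⟨(1 - (children v).card) * b - a, b, ?_, hb, ?_⟩
      · have h2 : ¬ Even b := Int.not_even_iff_odd.2 hb
        have h5 : ¬ Even (1 : ℤ) := by decide
        rw [← Int.not_even_iff_odd]
        simp only [Int.even_sub, Int.even_mul, Int.even_add] at hpar ⊢
        tauto
      · show (1 : ℝ) - ((children v).card : ℝ) - ∑ u ∈ children v, (Dfun children k u)⁻¹ = _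
        rw [hsum]
        field_simp
        push_cast
        ring
  -- main kernel-injectivity
  have key : ∀ x : {x : V // x ≠ r} → ℝ, M.mulVec x = 0 →
      (∑ w, if r ∈ (e w : Sym2 V) then x w else 0) = 0 → x = 0 := by
    intro x hx hr0
    set S : V → ℝ := fun a => ∑ w, if a ∈ (e w : Sym2 V) then x w else 0 with hS
    have star : ∀ v : {x : V // x ≠ r}, S (par v.1) + S v.1 = 2 * x v := by
      intro v
      have h0 : ∑ w, (if (G.lineGraph).Adj (e v) (e w) then (1:ℝ) else 0) * x w = 0 := by
        have h1 := congrFun hx v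
        simpa [hM, Matrix.mulVec, dotProduct, Matrix.submatrix_apply,
          SimpleGraph.adjMatrix_apply] using h1
      have hpt : ∀ w : {x : V // x ≠ r},
          (if par v.1 ∈ (e w : Sym2 V) then x w else 0)
            + (if v.1 ∈ (e w : Sym2 V) then x w else 0)
          = (if (G.lineGraph).Adj (e v) (e w) then (1:ℝ) else 0) * x w
            + (if w = v then 2 * x w else 0) := by
        intro w
        by_cases hwv : w = v
        · subst hwv
          have hadjf : ¬ (G.lineGraph).Adj (e w) (e w) := SimpleGraph.irrefl _
          have m1 : par w.1 ∈ (e w : Sym2 V) := (hmem _ w).2 (Or.inl rfl)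
          have m2 : w.1 ∈ (e w : Sym2 V) := (hmem _ w).2 (Or.inr rfl)
          simp [m1, m2, hadjf]
          ring
        · have hne : e v ≠ e w := fun h => hwv (he_inj h).symm
          have hnotboth : ¬ (par v.1 ∈ (e w : Sym2 V) ∧ v.1 ∈ (e w : Sym2 V)) := by
            rintro ⟨h1, h2⟩
            rcases (hmem _ w).1 h2 with h2' | h2'
            · rcases (hmem _ w).1 h1 with h1' | h1'
              · exact hpne v (by rw [h1', ← h2'])
              · have d1 := hdep v.1 v.2
                have d2 := hdep w.1 w.2
                rw [h1'] at d1
                rw [← h2'] at d2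
                omega
            · exact hwv (Subtype.ext h2'.symm)
          have hadj_iff : (G.lineGraph).Adj (e v) (e w) ↔
              (par v.1 ∈ (e w : Sym2 V) ∨ v.1 ∈ (e w : Sym2 V)) := by
            rw [SimpleGraph.lineGraph_adj_iff_exists]
            constructor
            · rintro ⟨-, a, ha1, ha2⟩
              rcases (hmem a v).1 ha1 with rfl | rfl
              · exact Or.inl ha2
              · exact Or.inr ha2
            · rintro (h | h)
              · exact ⟨hne, par v.1, (hmem _ v).2 (Or.inl rfl), h⟩
              · exact ⟨hne, v.1, (hmem _ v).2 (Or.inr rfl), h⟩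
          by_cases h1 : par v.1 ∈ (e w : Sym2 V) <;> by_cases h2 : v.1 ∈ (e w : Sym2 V)
          · exact absurd ⟨h1, h2⟩ hnotboth
          · simp [h1, h2, hadj_iff, hwv]
          · simp [h1, h2, hadj_iff, hwv]
          · simp [h1, h2, hadj_iff, hwv]
      calc S (par v.1) + S v.1
          = ∑ w, ((if par v.1 ∈ (e w : Sym2 V) then x w else 0)
              + (if v.1 ∈ (e w : Sym2 V) then x w else 0)) := by
            rw [Finset.sum_add_distrib]
        _ = ∑ w, ((if (G.lineGraph).Adj (e v) (e w) then (1:ℝ) else 0) * x w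
              + (if w = v then 2 * x w else 0)) := Finset.sum_congr rfl fun w _ => hpt w
        _ = 2 * x v := by
            rw [Finset.sum_add_distrib, h0, zero_add,
              Finset.sum_ite_eq' Finset.univ v (fun w => 2 * x w)]
            simp
    have sexp : ∀ v : {x : V // x ≠ r}, S v.1 = x v + ∑ u ∈ children v, x u := by
      intro v
      have h1 : ∀ w : {x : V // x ≠ r}, (v.1 ∈ (e w : Sym2 V)) ↔ (w = v ∨ w ∈ children v) := by
        intro w
        rw [hmem]
        constructor
        · rintro (h | h)
          · right; simp only [hch, Finset.mem_filter, Finset.mem_univ, true_and]; exact h.symm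
          · left; exact Subtype.ext h.symm
        · rintro (rfl | h)
          · right; rfl
          · left
            have hp : par w.1 = v.1 := by
              simpa [hch] using h
            exact hp.symm
      have h2 : S v.1 = ∑ w ∈ Finset.univ.filter (fun w => w = v ∨ w ∈ children v), x w := by
        rw [hS, Finset.sum_filter]
        exact Finset.sum_congr rfl fun w _ => if_congr (h1 w) rfl rfl
      have hvnot : v ∉ children v := by
        simp only [hch, Finset.mem_filter, Finset.mem_univ, true_and]
        exact hpne v
      have hfilter : Finset.univ.filter (fun w => w = v ∨ w ∈ children v)
          = insert v (children v) := by
        ext w; simp [Finset.mem_insert]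
      rw [h2, hfilter, Finset.sum_insert hvnot]
    have descent : ∀ (k : ℕ) (v : {x : V // x ≠ r}), n - G.dist r v.1 = k →
        S (par v.1) = Dfun children k v * S v.1 := by
      intro k
      induction k with
      | zero => intro v hv; exact absurd hv (by have := hbound v.1; omega)
      | succ k ih =>
        intro v hv
        have hdeps : ∀ u ∈ children v, n - G.dist r u.1 = k := by
          intro u hu
          have h1 := hchild_dep v u hu
          have h2 := hbound u.1
          omega
        have hu_eq : ∀ u ∈ children v,
            x u = ((Dfun children k u)⁻¹ * S v.1 + S v.1) / 2 := by
          intro u hu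
          have hpu : par u.1 = v.1 := by simpa [hch] using hu
          have hstar := star u
          rw [hpu] at hstar
          have hIH := ih u (hdeps u hu)
          rw [hpu] at hIH
          have hDne : Dfun children k u ≠ 0 := (OR k u (hdeps u hu)).ne_zero
          have hSu : S u.1 = (Dfun children k u)⁻¹ * S v.1 := by
            rw [hIH, inv_mul_cancel_left₀ hDne]
          linarith
        have hsum : ∑ u ∈ children v, x u
            = ((∑ u ∈ children v, (Dfun children k u)⁻¹) * S v.1
               + (children v).card * S v.1) / 2 := by
          rw [Finset.sum_congr rfl hu_eq, ← Finset.sum_div, Finset.sum_add_distrib,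
            ← Finset.sum_mul, Finset.sum_const, nsmul_eq_mul]
        have hstarv := star v
        have hsexp := sexp v
        have hD : Dfun children (k+1) v
            = 1 - ((children v).card : ℝ) - ∑ u ∈ children v, (Dfun children k u)⁻¹ := rfl
        rw [hD]
        have hexpand : (1 - ((children v).card : ℝ)
              - ∑ u ∈ children v, (Dfun children k u)⁻¹) * S v.1
            = S v.1 - ((children v).card : ℝ) * S v.1
              - (∑ u ∈ children v, (Dfun children k u)⁻¹) * S v.1 := by ring
        rw [hexpand]
        linarith
    have zero : ∀ (k : ℕ) (v : V), G.dist r v = k → S v = 0 := by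
      intro k
      induction k using Nat.strong_induction_on with
      | _ k ih =>
        intro v hvk
        by_cases hvr : v = r
        · rw [hvr]; exact hr0
        · have hdist := hdep v hvr
          have hpz : S (par v) = 0 := ih (G.dist r (par v)) (by omega) (par v) rfl
          have hdes := descent (n - G.dist r v) ⟨v, hvr⟩ rfl
          have hDne := (OR (n - G.dist r v) ⟨v, hvr⟩ rfl).ne_zero
          have h0 : Dfun children (n - G.dist r v) ⟨v, hvr⟩ * S v = 0 := by
            rw [← hdes]; exact hpz
          exact ((mul_eq_zero.mp h0).resolve_left hDne)
    funext v
    have hsz := zero (G.dist r v.1) v.1 rfl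
    have hsz2 := zero (G.dist r (par v.1)) (par v.1) rfl
    have hst := star v
    rw [hsz, hsz2] at hst
    have : x v = 0 := by linarith
    exact this
  -- assemble
  have hrank1 : M.rank ≤ ((G.lineGraph).adjMatrix ℝ).rank := rank_submatrix_le_general _ e e
  have hker : Module.finrank ℝ (LinearMap.ker M.mulVecLin) ≤ 1 := by
    set φ : ({x : V // x ≠ r} → ℝ) →ₗ[ℝ] ℝ :=
      { toFun := fun x => ∑ w, if r ∈ (e w : Sym2 V) then x w else 0
        map_add' := by
          intro x y
          rw [← Finset.sum_add_distrib]
          refine Finset.sum_congr rfl fun w _ => ?_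
          by_cases h : r ∈ (e w : Sym2 V) <;> simp [h]
        map_smul' := by
          intro c x
          rw [RingHom.id_apply, smul_eq_mul, Finset.mul_sum]
          refine Finset.sum_congr rfl fun w _ => ?_
          by_cases h : r ∈ (e w : Sym2 V) <;> simp [h] } with hφ
    have hinj : Function.Injective (φ.comp (LinearMap.ker M.mulVecLin).subtype) := by
      rw [← LinearMap.ker_eq_bot, LinearMap.ker_eq_bot']
      intro a ha
      have hmem' : M.mulVec a.1 = 0 := a.2
      have hz : (∑ w, if r ∈ (e w : Sym2 V) then a.1 w else 0) = 0 := ha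
      exact Subtype.ext (key a.1 hmem' hz)
    have := LinearMap.finrank_le_finrank_of_injective hinj
    simpa using this
  have hrn := LinearMap.finrank_range_add_finrank_ker M.mulVecLin
  rw [Module.finrank_fintype_fun_eq_card] at hrn
  have hcard : Fintype.card {x : V // x ≠ r} = n - 1 := by
    have := Fintype.card_subtype_compl (fun x : V => x = r)
    simp [Fintype.card_subtype_eq] at this
    simp [hn]
  have hMrank : M.rank = Module.finrank ℝ (LinearMap.range M.mulVecLin) := rfl
  have hpos : 1 ≤ n := by rw [hn]; exact Fintype.card_pos_iff.2 ⟨r⟩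
  omega

end LGR

/-- For a connected finite simple graph `G` on `n` vertices with at least one edge, the rank
of the (real) adjacency matrix of the line graph `L(G)` is at least `n - 2`. -/
theorem lineGraph_rank_ge {V : Type*} [Fintype V] (G : SimpleGraph V)
    (hconn : G.Connected) (hE : G.edgeSet.Nonempty) :
    Fintype.card V - 2 ≤ ((G.lineGraph).adjMatrix ℝ).rank := by
  classical
  obtain ⟨r⟩ := hconn.nonempty
  have hpar : ∀ v, v ≠ r → ∃ u, G.Adj u v ∧ G.dist r u + 1 = G.dist r v := by
    intro v hv
    obtain ⟨p, hp⟩ := (hconn.preconnected v r).exists_walk_length_eq_dist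
    cases p with
    | nil => exact absurd rfl hv
    | @cons _ u _ hadj q =>
      have hlen : q.length + 1 = G.dist v r := by
        simpa [SimpleGraph.Walk.length_cons] using hp
      have h1 : G.dist u r ≤ q.length := SimpleGraph.dist_le q
      have h2 : G.dist v r ≤ G.dist v u + G.dist u r := hconn.dist_triangle
      have h3 : G.dist v u ≤ 1 := by
        have := SimpleGraph.dist_le hadj.toWalk
        simpa using this
      have c1 : G.dist r u = G.dist u r := SimpleGraph.dist_comm
      have c2 : G.dist r v = G.dist v r := SimpleGraph.dist_comm
      exact ⟨u, hadj.symm, by omega⟩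
  have hbound : ∀ v, G.dist r v < Fintype.card V := by
    intro v
    obtain ⟨w⟩ := hconn.preconnected r v
    have h1 : G.dist r v ≤ (w.toPath : G.Walk r v).length := SimpleGraph.dist_le _
    have h2 := SimpleGraph.Walk.IsPath.length_lt (w.toPath.2)
    omega
  set par : V → V := fun v => if h : v = r then r else (hpar v h).choose with hpardef
  have hadj : ∀ v, v ≠ r → G.Adj (par v) v := by
    intro v hv
    simp only [hpardef, dif_neg hv]
    exact (hpar v hv).choose_spec.1
  have hdep : ∀ v, v ≠ r → G.dist r (par v) + 1 = G.dist r v := by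
    intro v hv
    simp only [hpardef, dif_neg hv]
    exact (hpar v hv).choose_spec.2
  exact LGR.core G r par hadj hdep hbound
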